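/- Suppose the leader follows the free-flow dynamics v̇_l(t) = a·(1 − (v_l(t)/v_free)^δ) with δ > 0 even, the initial data satisfy v₀ > v_l0 > 0 and x_l0 − x₀ − l = s₀, and additionally s₀ − (v₀ − v_l0)²/(2a) > 0. Let t₁ be the first time at which v(t₁) = v_l(t₁) (so v(t) > v_l(t) for t ∈ [0,t₁)). Then for all t ∈ [0, t₁] one has x_l(t) − x(t) ≥ l + s₀ + (v_l0 − v₀)·t + (a/2)·t² ≥ l + s₀ − (v₀ − v_l0)²/(2a) > l; in particular the vehicles do not collide before their velocities equalize. -/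

import Mathlib

open Set

/-- The IDM acceleration function. -/
noncomputable def IDMAcc (a b vfree τ s₀ l δ : ℝ) (x v xl vl : ℝ) : ℝ :=
  a * (1 - (|v| / vfree) ^ δ -
    ((2 * Real.sqrt (a * b) * (s₀ + v * τ) + v * (v - vl)) /
      (2 * Real.sqrt (a * b) * (xl - x - l))) ^ 2)

set_option maxHeartbeats 1000000 in
/-- **No potential collision before equilibrium of velocities.**
With a free-flow leader (`v̇_l = a (1 − (v_l/v_free)^δ)`, `δ > 0` even),
`v₀ > v_l0 > 0`, initial gap `s₀`, and `s₀ − (v₀ − v_l0)²/(2a) > 0`, if `t₁`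
is the first time at which `v(t₁) = v_l(t₁)`, then for all `t ∈ [0, t₁]`
`x_l(t) − x(t) ≥ l + s₀ + (v_l0 − v₀) t + (a/2) t² ≥ l + s₀ − (v₀ − v_l0)²/(2a) > l`,
so the vehicles do not collide before the velocities equalize. -/
theorem idm_no_collision_before_equilibrium
    (T a b vfree s₀ l τ : ℝ) (δ : ℕ)
    (x₀ xl₀ v₀ vl₀ t₁ : ℝ) (x xl v vl : ℝ → ℝ)
    (hT : 0 < T) (ha : 0 < a) (hb : 0 < b) (hvf : 0 < vfree)
    (hs₀ : 0 < s₀) (hl : 0 < l) (hτ : τ ∈ Ioo 0 T)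
    (hδpos : 0 < δ) (hδeven : Even δ)
    (hv₀ : vl₀ < v₀) (hvl₀ : 0 < vl₀) (hgap₀ : xl₀ - x₀ - l = s₀)
    (hsafe : 0 < s₀ - (v₀ - vl₀) ^ 2 / (2 * a))
    (hx0 : x 0 = x₀) (hxl0 : xl 0 = xl₀) (hv0 : v 0 = v₀) (hvl0 : vl 0 = vl₀)
    (hgap : ∀ t ∈ Icc (0:ℝ) T, 0 < xl t - x t - l)
    (hx : ∀ t ∈ Icc (0:ℝ) T, HasDerivAt x (v t) t)
    (hxl : ∀ t ∈ Icc (0:ℝ) T, HasDerivAt xl (vl t) t)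
    (hvl : ∀ t ∈ Icc (0:ℝ) T,
      HasDerivAt vl (a * (1 - (vl t / vfree) ^ δ)) t)
    (hv : ∀ t ∈ Icc (0:ℝ) T,
      HasDerivAt v
        (IDMAcc a b vfree τ s₀ l (δ : ℝ) (x t) (v t) (xl t) (vl t)) t)
    (ht₁ : t₁ ∈ Icc (0:ℝ) T) (heq : v t₁ = vl t₁)
    (hbefore : ∀ t ∈ Ico (0:ℝ) t₁, vl t < v t) :
    ∀ t ∈ Icc (0:ℝ) t₁,
      xl t - x t ≥ l + s₀ + (vl₀ - v₀) * t + (a / 2) * t ^ 2 ∧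
      l + s₀ + (vl₀ - v₀) * t + (a / 2) * t ^ 2 ≥
        l + s₀ - (v₀ - vl₀) ^ 2 / (2 * a) ∧
      l + s₀ - (v₀ - vl₀) ^ 2 / (2 * a) > l := by
  obtain ⟨ht₁0, ht₁T⟩ := ht₁
  have hτ0 : 0 < τ := hτ.1
  have hsub : Icc (0:ℝ) t₁ ⊆ Icc 0 T := Icc_subset_Icc le_rfl ht₁T
  have ht₁pos : 0 < t₁ := by
    rcases ht₁0.lt_or_eq with h | h
    · exact h
    · exfalso; rw [← h, hv0, hvl0] at heq; linarith
  have hmem0 : (0:ℝ) ∈ Icc (0:ℝ) t₁ := ⟨le_rfl, ht₁pos.le⟩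
  have hc : 0 < Real.sqrt (a * b) := Real.sqrt_pos.mpr (mul_pos ha hb)
  -- continuity
  have hcx : ContinuousOn x (Icc 0 t₁) := fun t ht =>
    ((hx t (hsub ht)).continuousAt).continuousWithinAt
  have hcxl : ContinuousOn xl (Icc 0 t₁) := fun t ht =>
    ((hxl t (hsub ht)).continuousAt).continuousWithinAt
  have hcv : ContinuousOn v (Icc 0 t₁) := fun t ht =>
    ((hv t (hsub ht)).continuousAt).continuousWithinAt
  have hcvl : ContinuousOn vl (Icc 0 t₁) := fun t ht =>
    ((hvl t (hsub ht)).continuousAt).continuousWithinAt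
  -- Step 1: the leader's velocity stays positive on [0, t₁]
  have hvlpos : ∀ t ∈ Icc (0:ℝ) t₁, 0 < vl t := by
    by_contra hcon
    push_neg at hcon
    obtain ⟨t₂, ht₂, hvl₂⟩ := hcon
    set S : Set ℝ := Icc 0 t₁ ∩ vl ⁻¹' (Iic 0) with hSdef
    have hSne : S.Nonempty := ⟨t₂, ht₂, hvl₂⟩
    have hSclosed : IsClosed S :=
      hcvl.preimage_isClosed_of_isClosed isClosed_Icc isClosed_Iic
    have hScomp : IsCompact S :=
      isCompact_Icc.of_isClosed_subset hSclosed inter_subset_left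
    have htm : sInf S ∈ S := hScomp.sInf_mem hSne
    set m := sInf S with hmdef
    have hm0 : 0 < m := by
      rcases htm.1.1.lt_or_eq with h | h
      · exact h
      · exfalso
        have := htm.2
        rw [← h] at this
        simp only [mem_preimage, mem_Iic, hvl0] at this
        linarith
    have hmt₁ : m ≤ t₁ := htm.1.2
    have hposlt : ∀ s ∈ Ico (0:ℝ) m, 0 < vl s := by
      intro s hs
      by_contra hns
      push_neg at hns
      have hsS : s ∈ S := ⟨⟨hs.1, hs.2.le.trans hmt₁⟩, hns⟩
      exact absurd (csInf_le hScomp.bddBelow hsS) (not_le.mpr hs.2)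
    have hvlm : vl m = 0 := by
      have hle : vl m ≤ 0 := htm.2
      have hge : 0 ≤ vl m := by
        have hcm : ContinuousAt vl m := (hvl m (hsub htm.1)).continuousAt
        have htend : Filter.Tendsto vl (nhdsWithin m (Iio m)) (nhds (vl m)) :=
          hcm.tendsto.mono_left nhdsWithin_le_nhds
        refine ge_of_tendsto htend ?_
        filter_upwards [Ioo_mem_nhdsLT hm0] with s hs
        exact (hposlt s ⟨hs.1.le, hs.2⟩).le
      linarith
    have hda : HasDerivAt vl a m := by
      have hd := hvl m (hsub htm.1)
      rw [hvlm] at hd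
      simpa [zero_pow hδpos.ne'] using hd
    have hslope : Filter.Tendsto (slope vl m) (nhdsWithin m (Iio m)) (nhds a) :=
      (hasDerivAt_iff_tendsto_slope.mp hda).mono_left
        (nhdsWithin_mono m (fun y hy => ne_of_lt hy))
    have hev : ∀ᶠ s in nhdsWithin m (Iio m), slope vl m s ≤ 0 := by
      filter_upwards [Ioo_mem_nhdsLT hm0] with s hs
      rw [slope_def_field, hvlm, sub_zero]
      exact div_nonpos_of_nonneg_of_nonpos (hposlt s ⟨hs.1.le, hs.2⟩).le
        (by linarith [hs.2])
    have : a ≤ 0 := le_of_tendsto hslope hev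
    linarith
  -- Step 2: the gap is nonincreasing on [0, t₁]
  have hganti : AntitoneOn (fun t => xl t - x t) (Icc 0 t₁) := by
    apply antitoneOn_of_deriv_nonpos (convex_Icc 0 t₁) (hcxl.sub hcx)
    · rw [interior_Icc]
      intro t ht
      exact (((hxl t (hsub (Ioo_subset_Icc_self ht))).sub
        (hx t (hsub (Ioo_subset_Icc_self ht)))).differentiableAt).differentiableWithinAt
    · rw [interior_Icc]
      intro t ht
      have hd := (hxl t (hsub (Ioo_subset_Icc_self ht))).sub
        (hx t (hsub (Ioo_subset_Icc_self ht)))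
      rw [hd.deriv]
      have := hbefore t ⟨ht.1.le, ht.2⟩
      linarith
  have hsle : ∀ t ∈ Icc (0:ℝ) t₁, xl t - x t ≤ l + s₀ := by
    intro t ht
    have := hganti hmem0 ht ht.1
    simp only [hx0, hxl0] at this
    linarith
  -- Step 3: v - vl + a t is nonincreasing on [0, t₁]
  have huanti : AntitoneOn (fun t => v t - vl t + a * t) (Icc 0 t₁) := by
    apply antitoneOn_of_deriv_nonpos (convex_Icc 0 t₁)
      ((hcv.sub hcvl).add (continuousOn_const.mul continuousOn_id))
    · rw [interior_Icc]
      intro t ht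
      have hd := ((hv t (hsub (Ioo_subset_Icc_self ht))).sub
        (hvl t (hsub (Ioo_subset_Icc_self ht)))).add
        ((hasDerivAt_id t).const_mul a)
      exact hd.differentiableAt.differentiableWithinAt
    · rw [interior_Icc]
      intro t ht
      have htmem : t ∈ Icc (0:ℝ) t₁ := Ioo_subset_Icc_self ht
      have hd := ((hv t (hsub htmem)).sub (hvl t (hsub htmem))).add
        ((hasDerivAt_id t).const_mul a)
      rw [HasDerivAt.deriv (f := v - vl + (fun x => a) * id) hd, mul_one]
      have hvlt : 0 < vl t := hvlpos t htmem
      have hvvl : vl t < v t := hbefore t ⟨ht.1.le, ht.2⟩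
      have hvt : 0 < v t := hvlt.trans hvvl
      have hgt : 0 < xl t - x t - l := hgap t (hsub htmem)
      have hst : xl t - x t - l ≤ s₀ := by linarith [hsle t htmem]
      -- rewrite the IDM acceleration
      rw [IDMAcc, abs_of_pos hvt, Real.rpow_natCast]
      set c := Real.sqrt (a * b) with hcdef
      set Z := (2 * c * (s₀ + v t * τ) + v t * (v t - vl t)) /
        (2 * c * (xl t - x t - l)) with hZdef
      have hD : 0 < 2 * c * (xl t - x t - l) := by positivity
      have hZ1 : 1 ≤ Z := by
        rw [hZdef, le_div_iff₀ hD]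
        nlinarith [mul_pos hvt hτ0, mul_pos hvt (sub_pos.mpr hvvl)]
      have hZ2 : 1 ≤ Z ^ 2 := by nlinarith
      have hRl : (vl t / vfree) ^ δ ≤ (v t / vfree) ^ δ := by
        gcongr
      nlinarith [hRl, hZ2]
  have hwle : ∀ t ∈ Icc (0:ℝ) t₁, v t - vl t + a * t ≤ v₀ - vl₀ := by
    intro t ht
    have := huanti hmem0 ht ht.1
    simp only [hv0, hvl0, mul_zero, add_zero] at this
    linarith
  -- Step 4: the shifted gap is nondecreasing on [0, t₁]
  have hpmono : MonotoneOn
      (fun t => xl t - x t - ((vl₀ - v₀) * t + (a / 2) * t ^ 2)) (Icc 0 t₁) := by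
    apply monotoneOn_of_deriv_nonneg (convex_Icc 0 t₁)
    · exact (hcxl.sub hcx).sub ((continuousOn_const.mul continuousOn_id).add
        (continuousOn_const.mul (continuousOn_pow 2)))
    · rw [interior_Icc]
      intro t ht
      have hd := ((hxl t (hsub (Ioo_subset_Icc_self ht))).sub
        (hx t (hsub (Ioo_subset_Icc_self ht)))).sub
        (((hasDerivAt_id t).const_mul (vl₀ - v₀)).add
          ((hasDerivAt_pow 2 t).const_mul (a / 2)))
      exact hd.differentiableAt.differentiableWithinAt
    · rw [interior_Icc]
      intro t ht
      have htmem : t ∈ Icc (0:ℝ) t₁ := Ioo_subset_Icc_self ht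
      have h1 : HasDerivAt (fun y => (vl₀ - v₀) * y + a / 2 * y ^ 2)
          (vl₀ - v₀ + a / 2 * (2 * t)) t := by
        have := ((hasDerivAt_id t).const_mul (vl₀ - v₀)).add
          ((hasDerivAt_pow 2 t).const_mul (a / 2))
        refine this.congr_deriv ?_
        norm_num
      have hd := ((hxl t (hsub htmem)).sub (hx t (hsub htmem))).sub h1
      rw [HasDerivAt.deriv (f := fun t => xl t - x t - ((vl₀ - v₀) * t + a / 2 * t ^ 2)) hd]
      linarith [hwle t htmem]
  -- conclusion
  intro t ht
  refine ⟨?_, ?_, by linarith⟩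
  · have := hpmono hmem0 ht ht.1
    simp only [hx0, hxl0, mul_zero, add_zero] at this
    norm_num at this
    nlinarith [this]
  · have h2a : (v₀ - vl₀) ^ 2 / (2 * a) * (2 * a) = (v₀ - vl₀) ^ 2 :=
      div_mul_cancel₀ _ (by positivity)
    nlinarith [sq_nonneg (a * t - (v₀ - vl₀)), ha]
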